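/- Let $M$ be the square matrix of size $d_+ = 2^{g-1}(2^g+1)$ whose rows and columns are indexed by even pairs $(a_1,a_2)$ and $(b_1,b_2)$ in $(\mathbb{Z}/2\mathbb{Z})^g \times (\mathbb{Z}/2\mathbb{Z})^g$ (i.e. pairs with $a_1\cdot a_2 = 0$), with entry $(-1)^{a_1\cdot b_2 + a_2\cdot b_1}$. Then $M^2 = 2^{g-1} M + 2^{2g-1} I$, where $I$ is the identity matrix. -/

import Mathlib

open Finset

def dot {g : ℕ} (a b : Fin g → ZMod 2) : ZMod 2 := ∑ i, a i * b i

def sgn (x : ZMod 2) : ℚ := (-1 : ℚ) ^ x.val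

/-- The type of even pairs in `(ℤ/2ℤ)^g × (ℤ/2ℤ)^g`. -/
def EvenPair (g : ℕ) : Type :=
  { p : (Fin g → ZMod 2) × (Fin g → ZMod 2) // dot p.1 p.2 = 0 }

instance (g : ℕ) : Fintype (EvenPair g) := by unfold EvenPair; infer_instance
instance (g : ℕ) : DecidableEq (EvenPair g) := by unfold EvenPair; infer_instance

/-- The matrix with entries `(-1)^(a₁·b₂ + a₂·b₁)` indexed by even pairs. -/
def M (g : ℕ) : Matrix (EvenPair g) (EvenPair g) ℚ :=
  fun a b => sgn (dot a.1.1 b.1.2 + dot a.1.2 b.1.1)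

lemma zmod2_cases (x : ZMod 2) : x = 0 ∨ x = 1 := by revert x; decide

lemma sgn_zero : sgn 0 = 1 := by norm_num [sgn]

lemma sgn_one : sgn 1 = -1 := by norm_num [sgn, ZMod.val_one]

lemma sgn_add (x y : ZMod 2) : sgn (x + y) = sgn x * sgn y := by
  rcases zmod2_cases x with hx | hx <;> rcases zmod2_cases y with hy | hy <;>
    subst hx <;> subst hy <;>
    simp [sgn_zero, sgn_one, show (1:ZMod 2)+1 = 0 from by decide]

lemma dot_comm {g : ℕ} (a b : Fin g → ZMod 2) : dot a b = dot b a := by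
  simp [dot, mul_comm]

lemma dot_add_left {g : ℕ} (a b c : Fin g → ZMod 2) : dot (a + b) c = dot a c + dot b c := by
  simp [dot, add_mul, Finset.sum_add_distrib]

lemma dot_add_right {g : ℕ} (a b c : Fin g → ZMod 2) : dot a (b + c) = dot a b + dot a c := by
  simp [dot, mul_add, Finset.sum_add_distrib]

lemma addfun_eq_zero {g : ℕ} (x y : Fin g → ZMod 2) : x + y = 0 ↔ x = y := by
  have h2 : ∀ t s : ZMod 2, t + s = 0 ↔ t = s := by decide
  simp only [funext_iff, Pi.add_apply, Pi.zero_apply, h2]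

lemma char_sum {g : ℕ} (u : Fin g → ZMod 2) :
    ∑ c : Fin g → ZMod 2, sgn (dot c u) = if u = 0 then (2:ℚ)^g else 0 := by
  split_ifs with h
  · subst h
    have : ∀ c : Fin g → ZMod 2, sgn (dot c 0) = 1 := by
      intro c; simp [dot, sgn]
    simp [this, Finset.card_univ]
  · obtain ⟨i, hi⟩ : ∃ i, u i ≠ 0 := by
      by_contra hc; push_neg at hc; exact h (funext hc)
    have hui : u i = 1 := by
      have : ∀ x : ZMod 2, x ≠ 0 → x = 1 := by decide
      exact this _ hi
    set t : Fin g → ZMod 2 := fun j => if j = i then 1 else 0 with ht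
    have hdt : dot t u = 1 := by
      simp [dot, ht, Finset.sum_ite_eq', hui]
    have hb : ∑ c : Fin g → ZMod 2, sgn (dot (c + t) u)
        = ∑ c : Fin g → ZMod 2, sgn (dot c u) :=
      Fintype.sum_equiv (Equiv.addRight t) _ _ (fun c => rfl)
    have hstep : ∀ c : Fin g → ZMod 2, sgn (dot (c + t) u) = - sgn (dot c u) := by
      intro c
      rw [dot_add_left, sgn_add, hdt]
      rw [sgn_one]; ring
    have : ∑ c : Fin g → ZMod 2, sgn (dot c u)
        = - ∑ c : Fin g → ZMod 2, sgn (dot c u) := by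
      conv_lhs => rw [← hb, Finset.sum_congr rfl fun c _ => hstep c,
        Finset.sum_neg_distrib]
    linarith

lemma twisted {g : ℕ} (u v : Fin g → ZMod 2) :
    ∑ p : (Fin g → ZMod 2) × (Fin g → ZMod 2),
      sgn (dot p.1 p.2 + dot p.1 v + dot p.2 u) = (2:ℚ)^g * sgn (dot u v) := by
  have huu : ∀ x : Fin g → ZMod 2, x + x = 0 := fun x => (addfun_eq_zero x x).2 rfl
  rw [Fintype.sum_prod_type]
  have key : ∀ c₁ c₂ : Fin g → ZMod 2,
      sgn (dot c₁ c₂ + dot c₁ v + dot c₂ u) = sgn (dot c₁ v) * sgn (dot c₂ (c₁ + u)) := by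
    intro c₁ c₂
    rw [← sgn_add, dot_add_right, dot_comm c₂ c₁]
    ring_nf
  calc ∑ c₁ : Fin g → ZMod 2, ∑ c₂ : Fin g → ZMod 2,
        sgn (dot c₁ c₂ + dot c₁ v + dot c₂ u)
      = ∑ c₁ : Fin g → ZMod 2, sgn (dot c₁ v) *
          (if c₁ + u = 0 then (2:ℚ)^g else 0) := by
        refine Finset.sum_congr rfl fun c₁ _ => ?_
        rw [← char_sum (c₁ + u), Finset.mul_sum]
        exact Finset.sum_congr rfl fun c₂ _ => key c₁ c₂
    _ = ∑ c₁ : Fin g → ZMod 2, (if c₁ = u then sgn (dot c₁ v) * (2:ℚ)^g else 0) := by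
        refine Finset.sum_congr rfl fun c₁ _ => ?_
        simp only [addfun_eq_zero, mul_ite, mul_zero]
    _ = (2:ℚ)^g * sgn (dot u v) := by
        rw [Finset.sum_ite_eq' Finset.univ u]
        simp [mul_comm]

lemma sum_even {g : ℕ} (f : (Fin g → ZMod 2) × (Fin g → ZMod 2) → ℚ) :
    ∑ c : EvenPair g, f c.1 =
      (1/2) * (∑ p : (Fin g → ZMod 2) × (Fin g → ZMod 2), f p)
      + (1/2) * ∑ p : (Fin g → ZMod 2) × (Fin g → ZMod 2), sgn (dot p.1 p.2) * f p := by
  have key : ∀ p : (Fin g → ZMod 2) × (Fin g → ZMod 2),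
      (if dot p.1 p.2 = 0 then f p else 0)
        = (1/2) * f p + (1/2) * (sgn (dot p.1 p.2) * f p) := by
    intro p
    rcases zmod2_cases (dot p.1 p.2) with h | h <;> rw [h]
    · rw [sgn_zero, if_pos rfl]; ring
    · rw [sgn_one, if_neg (show (1:ZMod 2) ≠ 0 from by decide)]; ring
  have h1 : ∑ c : EvenPair g, f c.1
      = ∑ p : (Fin g → ZMod 2) × (Fin g → ZMod 2), (if dot p.1 p.2 = 0 then f p else 0) := by
    rw [← Finset.sum_filter]
    refine Finset.sum_bij (fun (c : EvenPair g) _ => c.1) ?_ ?_ ?_ ?_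
    · intro c _; simp [c.2]
    · intro c _ d _ h; exact Subtype.ext h
    · intro p hp
      exact ⟨⟨p, (Finset.mem_filter.1 hp).2⟩, Finset.mem_univ _, rfl⟩
    · intro c _; rfl
  rw [h1, Finset.sum_congr rfl fun p _ => key p, Finset.sum_add_distrib,
    ← Finset.mul_sum, ← Finset.mul_sum]

lemma T1sum {g : ℕ} (u v : Fin g → ZMod 2) :
    ∑ p : (Fin g → ZMod 2) × (Fin g → ZMod 2), sgn (dot p.1 v + dot p.2 u)
      = (if v = 0 then (2:ℚ)^g else 0) * (if u = 0 then (2:ℚ)^g else 0) := by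
  rw [Fintype.sum_prod_type, ← char_sum v, ← char_sum u, Finset.sum_mul]
  refine Finset.sum_congr rfl fun p1 _ => ?_
  rw [Finset.mul_sum]
  exact Finset.sum_congr rfl fun p2 _ => sgn_add _ _

lemma T2sum {g : ℕ} (u v : Fin g → ZMod 2) :
    ∑ p : (Fin g → ZMod 2) × (Fin g → ZMod 2), sgn (dot p.1 p.2) * sgn (dot p.1 v + dot p.2 u)
      = (2:ℚ)^g * sgn (dot u v) := by
  rw [← twisted u v]
  refine Finset.sum_congr rfl fun p _ => ?_
  simp only [sgn_add, mul_assoc]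

theorem stmt_3 (g : ℕ) (hg : 1 ≤ g) :
    M g * M g = ((2 : ℚ) ^ (g - 1)) • M g + ((2 : ℚ) ^ (2 * g - 1)) • 1 := by
  obtain ⟨k, rfl⟩ : ∃ k, g = k + 1 := ⟨g - 1, (Nat.succ_pred_eq_of_pos hg).symm⟩
  ext a b
  rw [Matrix.mul_apply, Matrix.add_apply, Matrix.smul_apply, Matrix.smul_apply,
    Matrix.one_apply, smul_eq_mul, smul_eq_mul]
  have hM : ∀ c : EvenPair (k+1), M (k+1) a c * M (k+1) c b
      = sgn (dot c.1.1 (a.1.2 + b.1.2) + dot c.1.2 (a.1.1 + b.1.1)) := by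
    intro c
    show sgn _ * sgn _ = _
    rw [← sgn_add]
    congr 1
    rw [dot_add_right, dot_add_right, dot_comm a.1.1 c.1.2, dot_comm a.1.2 c.1.1]
    ring
  rw [Finset.sum_congr rfl fun c _ => hM c]
  rw [sum_even (fun p => sgn (dot p.1 (a.1.2 + b.1.2) + dot p.2 (a.1.1 + b.1.1)))]
  rw [T1sum, T2sum]
  have hdotuv : dot (a.1.1 + b.1.1) (a.1.2 + b.1.2) = dot a.1.1 b.1.2 + dot a.1.2 b.1.1 := by
    rw [dot_add_left, dot_add_right, dot_add_right, a.2, b.2, dot_comm b.1.1 a.1.2]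
    ring
  rw [hdotuv]
  have heq : a = b ↔ (a.1.1 + b.1.1 = 0 ∧ a.1.2 + b.1.2 = 0) := by
    rw [addfun_eq_zero, addfun_eq_zero, ← Prod.ext_iff]
    exact Subtype.ext_iff
  have hMab : M (k+1) a b = sgn (dot a.1.1 b.1.2 + dot a.1.2 b.1.1) := rfl
  rw [hMab]
  have hexp : 2 * (k + 1) - 1 = 2 * k + 1 := by omega
  rw [hexp, Nat.add_sub_cancel]
  by_cases hab : a = b
  · rw [if_pos hab]
    obtain ⟨hu, hv⟩ := heq.1 hab
    rw [if_pos hv, if_pos hu]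
    ring
  · rw [if_neg hab]
    have hnot : ¬(a.1.2 + b.1.2 = 0) ∨ ¬(a.1.1 + b.1.1 = 0) := by
      by_contra hc
      push_neg at hc
      exact hab (heq.2 ⟨hc.2, hc.1⟩)
    rcases hnot with h | h
    · rw [if_neg h]; ring
    · rw [if_neg h]; ring
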